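/- For every integer N ≥ 1 and every real t with |t| ≤ 2πN, |z_N(t) − √(4πN) · F(t/√(4πN))| ≤ |t|⁵/(10·(2πN)³). (Here the integrality of N is used through the identity exp(−i·2πN) = 1.) -/

import Mathlib

lemma exp_I_sub_one (θ : ℝ) : ‖Complex.exp ((θ:ℂ) * Complex.I) - 1‖ ≤ |θ| := by
  have h2 : Complex.exp ((θ:ℂ) * Complex.I) - 1
      = Complex.mk (Real.cos θ - 1) (Real.sin θ) := by
    rw [Complex.exp_mul_I]
    apply Complex.ext <;> simp [Complex.cos_ofReal_re, Complex.sin_ofReal_re]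
  have h3 : ‖Complex.mk (Real.cos θ - 1) (Real.sin θ)‖
      = Real.sqrt ((Real.cos θ - 1)^2 + (Real.sin θ)^2) := by
    rw [Complex.norm_def, Complex.normSq_mk]; ring_nf
  rw [h2, h3, ← Real.sqrt_sq_eq_abs]
  apply Real.sqrt_le_sqrt
  have e : (Real.cos θ - 1)^2 + (Real.sin θ)^2 = 2 - 2 * Real.cos θ := by
    linear_combination Real.sin_sq_add_cos_sq θ
  have hc := Real.one_sub_sq_div_two_le_cos (x := θ)
  linarith

lemma exp_I_lip (x y : ℝ) :
    ‖Complex.exp ((x:ℂ) * Complex.I) - Complex.exp ((y:ℂ) * Complex.I)‖ ≤ |x - y| := by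
  have h : Complex.exp ((x:ℂ) * Complex.I) - Complex.exp ((y:ℂ) * Complex.I)
      = Complex.exp ((y:ℂ) * Complex.I) * (Complex.exp (((x - y : ℝ):ℂ) * Complex.I) - 1) := by
    rw [mul_sub, mul_one, ← Complex.exp_add]
    push_cast; ring_nf
  rw [h, norm_mul]
  have h1 : ‖Complex.exp ((y:ℂ) * Complex.I)‖ = 1 := by
    simp [Complex.norm_exp_ofReal_mul_I]
  rw [h1, one_mul]
  exact exp_I_sub_one (x - y)

lemma phase_bound {a u : ℝ} (ha : 0 < a) (hu : u^2 ≤ a^2) :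
    |(a - Real.sqrt (a^2 - u^2)) - u^2/(2*a)| ≤ u^4/(2*a^3) := by
  set s := Real.sqrt (a^2 - u^2) with hs_def
  have hs : 0 ≤ s := Real.sqrt_nonneg _
  have hs2 : s^2 = a^2 - u^2 := Real.sq_sqrt (by linarith)
  have h2a : (0:ℝ) < 2*a := by linarith
  have hnn : 0 ≤ a - s - u^2/(2*a) := by
    rw [sub_nonneg, div_le_iff₀ h2a]
    nlinarith [sq_nonneg (a - s)]
  rw [abs_of_nonneg hnn]
  have e1 : a - s - u^2/(2*a) = (2*a^2 - 2*a*s - u^2)/(2*a) := by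
    field_simp
  rw [e1, div_le_div_iff₀ h2a (by positivity)]
  have hu2 : u^2 = a^2 - s^2 := by linarith
  have hu4 : u^4 = (a^2 - s^2)^2 := by rw [show u^4 = (u^2)^2 by ring, hu2]
  rw [hu4, hu2]
  nlinarith [mul_nonneg (mul_nonneg h2a.le (sq_nonneg (a - s)))
    (show (0:ℝ) ≤ 2*a*s + s^2 by nlinarith)]

lemma main_aux (a b t : ℝ) (ha : 0 < a) (hb2 : b^2 = 2*a) (hb : 0 < b)
    (h1 : Complex.exp ((a:ℂ) * Complex.I) = 1) (ht : |t| ≤ a) :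
    ‖(∫ u in (0:ℝ)..t, Complex.exp (-Complex.I * Real.sqrt (a^2 - u^2))) -
      (b:ℂ) * ∫ v in (0:ℝ)..t/b, Complex.exp (Complex.I * (v:ℝ)^2)‖ ≤ |t|^5 / (10*a^3) := by
  set f : ℝ → ℂ := fun u => Complex.exp (((a - Real.sqrt (a^2 - u^2) : ℝ):ℂ) * Complex.I)
    with hf_def
  set g : ℝ → ℂ := fun u => Complex.exp (((u^2/(2*a) : ℝ):ℂ) * Complex.I) with hg_def
  have hf_cont : Continuous f := by
    apply Complex.continuous_exp.comp
    exact ((Complex.continuous_ofReal.comp (by fun_prop)).mul continuous_const)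
  have hg_cont : Continuous g := by
    apply Complex.continuous_exp.comp
    exact ((Complex.continuous_ofReal.comp (by fun_prop)).mul continuous_const)
  -- step A
  have e_f : (∫ u in (0:ℝ)..t, Complex.exp (-Complex.I * Real.sqrt (a^2 - u^2)))
      = ∫ u in (0:ℝ)..t, f u := by
    apply intervalIntegral.integral_congr
    intro u _
    rw [hf_def]
    simp only
    rw [show ((a - Real.sqrt (a^2 - u^2) : ℝ):ℂ) * Complex.I
        = (a:ℂ) * Complex.I + -Complex.I * (Real.sqrt (a^2 - u^2) : ℝ) by push_cast; ring,
      Complex.exp_add, h1, one_mul]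
  -- step B
  have e_g : (b:ℂ) * (∫ v in (0:ℝ)..t/b, Complex.exp (Complex.I * (v:ℝ)^2))
      = ∫ u in (0:ℝ)..t, g u := by
    have h := intervalIntegral.integral_comp_div (a := (0:ℝ)) (b := t) (c := b)
      (f := fun v : ℝ => Complex.exp (Complex.I * ((v:ℂ))^2)) hb.ne'
    rw [zero_div] at h
    have hsm : (b:ℂ) * (∫ v in (0:ℝ)..t/b, Complex.exp (Complex.I * (v:ℝ)^2))
        = b • ∫ v in (0:ℝ)..t/b, Complex.exp (Complex.I * ((v:ℂ))^2) := by
      rw [Complex.real_smul]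
    rw [hsm, ← h]
    apply intervalIntegral.integral_congr
    intro u _
    rw [hg_def]
    simp only
    have hb2c : ((b:ℂ))^2 = 2*(a:ℂ) := by exact_mod_cast hb2
    push_cast
    rw [div_pow, hb2c]
    ring
  rw [e_f, e_g, ← intervalIntegral.integral_sub (hf_cont.intervalIntegrable _ _)
    (hg_cont.intervalIntegrable _ _)]
  -- pointwise bound
  have hpt : ∀ u ∈ Set.uIcc (0:ℝ) t, ‖f u - g u‖ ≤ u^4/(2*a^3) := by
    intro u hu
    have hta := abs_le.mp ht
    have hu2 : u^2 ≤ a^2 := by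
      rcases Set.mem_uIcc.mp hu with ⟨h1', h2'⟩ | ⟨h1', h2'⟩ <;> nlinarith
    calc ‖f u - g u‖ ≤ |(a - Real.sqrt (a^2 - u^2)) - u^2/(2*a)| := exp_I_lip _ _
      _ ≤ u^4/(2*a^3) := phase_bound ha hu2
  have hcont2 : Continuous fun u : ℝ => u^4/(2*a^3) := by fun_prop
  rcases le_total 0 t with h | h
  · calc ‖∫ u in (0:ℝ)..t, (f u - g u)‖
        ≤ ∫ u in (0:ℝ)..t, ‖f u - g u‖ := intervalIntegral.norm_integral_le_integral_norm h
      _ ≤ ∫ u in (0:ℝ)..t, u^4/(2*a^3) := by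
          apply intervalIntegral.integral_mono_on h
            ((hf_cont.sub hg_cont).norm.intervalIntegrable _ _)
            (hcont2.intervalIntegrable _ _)
          intro u hu
          exact hpt u (by rwa [Set.uIcc_of_le h])
      _ = |t|^5/(10*a^3) := by
          rw [intervalIntegral.integral_div, integral_pow, abs_of_nonneg h]
          norm_num; ring
  · rw [intervalIntegral.integral_symm, norm_neg]
    calc ‖∫ u in t..(0:ℝ), (f u - g u)‖
        ≤ ∫ u in t..(0:ℝ), ‖f u - g u‖ := intervalIntegral.norm_integral_le_integral_norm h
      _ ≤ ∫ u in t..(0:ℝ), u^4/(2*a^3) := by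
          apply intervalIntegral.integral_mono_on h
            ((hf_cont.sub hg_cont).norm.intervalIntegrable _ _)
            (hcont2.intervalIntegrable _ _)
          intro u hu
          exact hpt u (by rwa [Set.uIcc_of_ge h])
      _ = |t|^5/(10*a^3) := by
          rw [intervalIntegral.integral_div, integral_pow, abs_of_nonpos h]
          norm_num; ring

/-- The orange-peel curve of width `1/N`: `z_N(t) = ∫_0^t exp(-i √((2πN)² - u²)) du`. -/
noncomputable def orangePeel (N : ℕ) (t : ℝ) : ℂ :=
  ∫ u in (0:ℝ)..t, Complex.exp (-Complex.I * Real.sqrt ((2 * Real.pi * N) ^ 2 - u ^ 2))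

/-- The Euler spiral `F(T) = ∫_0^T exp(i v²) dv`. -/
noncomputable def eulerSpiral (T : ℝ) : ℂ :=
  ∫ v in (0:ℝ)..T, Complex.exp (Complex.I * v ^ 2)

/-- For every integer `N ≥ 1` and `|t| ≤ 2πN`,
`|z_N(t) − √(4πN) · F(t/√(4πN))| ≤ |t|⁵ / (10 (2πN)³)`. -/
theorem orangePeel_close_to_eulerSpiral (N : ℕ) (hN : 1 ≤ N) (t : ℝ)
    (ht : |t| ≤ 2 * Real.pi * N) :
    ‖orangePeel N t -
        (Real.sqrt (4 * Real.pi * N) : ℂ) * eulerSpiral (t / Real.sqrt (4 * Real.pi * N))‖ ≤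
      |t| ^ 5 / (10 * (2 * Real.pi * N) ^ 3) := by
  have hπ := Real.pi_pos
  have hN1 : (1:ℝ) ≤ (N:ℝ) := by exact_mod_cast hN
  have ha : 0 < 2 * Real.pi * (N:ℝ) := by nlinarith
  have hb2 : (Real.sqrt (4 * Real.pi * N))^2 = 2 * (2 * Real.pi * (N:ℝ)) := by
    rw [Real.sq_sqrt (by positivity)]; ring
  have hb : 0 < Real.sqrt (4 * Real.pi * (N:ℝ)) := Real.sqrt_pos.mpr (by positivity)
  have h1 : Complex.exp (((2 * Real.pi * (N:ℝ) : ℝ):ℂ) * Complex.I) = 1 := by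
    have h := Complex.exp_int_mul_two_pi_mul_I (N:ℤ)
    rw [← h]; congr 1; push_cast; ring
  have := main_aux (2 * Real.pi * N) (Real.sqrt (4 * Real.pi * N)) t ha hb2 hb h1 ht
  rw [orangePeel, eulerSpiral]
  exact this
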